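/- arXiv:1902.09287 — 2 statements merged into one kernel-verified Lean document; each statement's English description precedes it below -/
import Mathlib

section
/- The best rank-r approximation property underlying POD: for a matrix Y ∈ ℝ^{N×m} with singular value decomposition Y = UΣVᵀ and singular values σ₁ ≥ σ₂ ≥ …, the orthonormal set consisting of the first r left singular vectors φ₁,…,φ_r minimizes Σ_{j=1}^m ‖y_j − Σ_{i=1}^r ⟨y_j, φ_i⟩φ_i‖² over all orthonormal families of size r, and the minimal value equals Σ_{i>r} σ_i². -/
open Finset Matrix

/-- Orthonormal expansion: sum of squares of an expansion in an orthonormal family. -/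
lemma sum_sq_ortho {ι κ : Type*} [Fintype ι] [Fintype κ] [DecidableEq ι] (v : ι → κ → ℝ)
    (hv : ∀ l l' : ι, ∑ j, v l j * v l' j = if l = l' then 1 else 0) (a : ι → ℝ) :
    ∑ j, (∑ l, a l * v l j) ^ 2 = ∑ l, (a l) ^ 2 := by
  have : ∀ j : κ, (∑ l, a l * v l j) ^ 2
      = ∑ l, ∑ l', (a l * a l') * (v l j * v l' j) := by
    intro j
    rw [sq, Finset.sum_mul_sum]
    exact Finset.sum_congr rfl fun l _ => Finset.sum_congr rfl fun l' _ => by ring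
  rw [Finset.sum_congr rfl fun j _ => this j, Finset.sum_comm]
  refine Finset.sum_congr rfl fun l _ => ?_
  rw [Finset.sum_comm]
  have : ∀ l' : ι, ∑ j, (a l * a l') * (v l j * v l' j)
      = (a l * a l') * (if l = l' then 1 else 0) := by
    intro l'; rw [← Finset.mul_sum, hv l l']
  rw [Finset.sum_congr rfl fun l' _ => this l']
  simp [sq]

/-- Pointwise expansion (Bessel identity). -/
lemma bessel_identity {N r : ℕ} (ψ : Fin r → Fin N → ℝ)
    (hψ : ∀ i i' : Fin r, ∑ n, ψ i n * ψ i' n = if i = i' then 1 else 0)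
    (y : Fin N → ℝ) :
    ∑ n, (y n - ∑ i, (∑ p, y p * ψ i p) * ψ i n) ^ 2
      = ∑ n, (y n) ^ 2 - ∑ i, (∑ p, y p * ψ i p) ^ 2 := by
  set c : Fin r → ℝ := fun i => ∑ p, y p * ψ i p with hc
  have expand : ∀ n, (y n - ∑ i, c i * ψ i n) ^ 2
      = (y n)^2 - 2 * (y n * ∑ i, c i * ψ i n) + (∑ i, c i * ψ i n)^2 := by
    intro n; ring
  rw [Finset.sum_congr rfl fun n _ => expand n]
  rw [Finset.sum_add_distrib, Finset.sum_sub_distrib]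
  have h3 : ∑ n, (∑ i, c i * ψ i n) ^ 2 = ∑ i, (c i)^2 := sum_sq_ortho ψ hψ c
  have h2 : ∑ n, 2 * (y n * ∑ i, c i * ψ i n) = 2 * ∑ i, (c i)^2 := by
    have step1 : ∀ n, 2 * (y n * ∑ i, c i * ψ i n) = ∑ i, 2 * c i * (y n * ψ i n) := by
      intro n; rw [Finset.mul_sum, Finset.mul_sum]
      exact Finset.sum_congr rfl fun i _ => by ring
    rw [Finset.sum_congr rfl fun n _ => step1 n, Finset.sum_comm, Finset.mul_sum]
    refine Finset.sum_congr rfl fun i _ => ?_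
    rw [← Finset.mul_sum]
    have : ∑ n, y n * ψ i n = c i := rfl
    rw [this]; ring
  rw [h3, h2]; ring

/-- Ky Fan type bound. -/
lemma kyfan {N r : ℕ} (hr : r ≤ N) (lam t : ℕ → ℝ)
    (hmono : ∀ i j : ℕ, i ≤ j → lam j ≤ lam i) (hpos : ∀ i, 0 ≤ lam i)
    (ht0 : ∀ x, 0 ≤ t x) (ht1 : ∀ x, t x ≤ 1)
    (hsum : ∑ x ∈ range N, t x = r) :
    ∑ x ∈ range N, lam x * t x ≤ ∑ x ∈ range r, lam x := by
  have hsplit : ∀ f : ℕ → ℝ, ∑ x ∈ range N, f x = ∑ x ∈ range r, f x + ∑ x ∈ Ico r N, f x := by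
    intro f
    rw [Finset.range_eq_Ico, Finset.range_eq_Ico]
    exact (Finset.sum_Ico_consecutive f (Nat.zero_le r) hr).symm
  have h1 : ∑ x ∈ range r, lam x * t x
      ≤ ∑ x ∈ range r, (lam x + lam r * (t x - 1)) := by
    refine Finset.sum_le_sum fun x hx => ?_
    have hx' : x ≤ r := le_of_lt (Finset.mem_range.mp hx)
    nlinarith [hmono x r hx', ht1 x, ht0 x, hpos x]
  have h2 : ∑ x ∈ Ico r N, lam x * t x ≤ ∑ x ∈ Ico r N, lam r * t x := by
    refine Finset.sum_le_sum fun x hx => ?_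
    have := hmono r x (Finset.mem_Ico.mp hx).1
    exact mul_le_mul_of_nonneg_right this (ht0 x)
  have e1 : ∑ x ∈ range r, (lam x + lam r * (t x - 1))
      = ∑ x ∈ range r, lam x + lam r * (∑ x ∈ range r, t x) - r * lam r := by
    rw [Finset.sum_add_distrib, Finset.mul_sum]
    rw [Finset.sum_congr rfl (fun x _ => (by ring : lam r * (t x - 1) = lam r * t x - lam r))]
    rw [Finset.sum_sub_distrib, Finset.sum_const, Finset.card_range]
    ring
  have e2 : ∑ x ∈ Ico r N, lam r * t x = lam r * ∑ x ∈ Ico r N, t x := by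
    rw [Finset.mul_sum]
  have ht : ∑ x ∈ range r, t x + ∑ x ∈ Ico r N, t x = r := by
    rw [← hsplit t]; exact hsum
  calc ∑ x ∈ range N, lam x * t x
      = ∑ x ∈ range r, lam x * t x + ∑ x ∈ Ico r N, lam x * t x := hsplit _
    _ ≤ (∑ x ∈ range r, (lam x + lam r * (t x - 1))) + ∑ x ∈ Ico r N, lam r * t x :=
        add_le_add h1 h2
    _ = ∑ x ∈ range r, lam x := by rw [e1, e2]; nlinarith [hpos r]

/-- Coordinates of `w` in the columns of `U`, as a function on `ℕ`. -/
def cnat {N : ℕ} (U : Matrix (Fin N) (Fin N) ℝ) (w : Fin N → ℝ) (x : ℕ) : ℝ :=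
  if h : x < N then ∑ p : Fin N, w p * U p ⟨x, h⟩ else 0

open Matrix in
lemma key_formula {N m : ℕ} (Y : Matrix (Fin N) (Fin m) ℝ)
    (U : Matrix (Fin N) (Fin N) ℝ) (V : Matrix (Fin m) (Fin m) ℝ) (σ : ℕ → ℝ)
    (hVe : ∀ l l' : Fin m, ∑ j : Fin m, V j l * V j l' = if l = l' then 1 else 0)
    (hSVD : Y = U * (Matrix.of fun (i : Fin N) (j : Fin m) =>
      if (i : ℕ) = (j : ℕ) then σ i else 0) * Vᵀ)
    (w : Fin N → ℝ) :
    ∑ j : Fin m, (∑ p : Fin N, Y p j * w p) ^ 2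
      = ∑ x ∈ range N, (if x < m then σ x ^ 2 else 0) * (cnat U w x) ^ 2 := by
  have hY : ∀ (p : Fin N) (j : Fin m), Y p j
      = ∑ l : Fin m, (∑ k : Fin N, U p k * (if (k : ℕ) = (l : ℕ) then σ (k : ℕ) else 0)) * V j l := by
    intro p j; rw [hSVD]
    simp [Matrix.mul_apply, Matrix.transpose_apply, Finset.sum_mul]
  have hS : ∀ j : Fin m, (∑ p : Fin N, Y p j * w p)
      = ∑ l : Fin m, (∑ k : Fin N, (∑ p : Fin N, w p * U p k) * (if (k : ℕ) = (l : ℕ) then σ (k : ℕ) else 0)) * V j l := by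
    intro j
    rw [Finset.sum_congr rfl fun p _ => by rw [hY p j]]
    have step : ∀ p : Fin N, (∑ l : Fin m, (∑ k : Fin N, U p k * (if (k:ℕ) = (l:ℕ) then σ (k:ℕ) else 0)) * V j l) * w p
        = ∑ l : Fin m, (∑ k : Fin N, (w p * U p k) * (if (k:ℕ) = (l:ℕ) then σ (k:ℕ) else 0)) * V j l := by
      intro p
      rw [Finset.sum_mul]
      refine Finset.sum_congr rfl fun l _ => ?_
      rw [Finset.sum_mul]
      conv_rhs => rw [Finset.sum_mul]
      conv_lhs => rw [Finset.sum_mul]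
      refine Finset.sum_congr rfl fun k _ => ?_
      ring
    rw [Finset.sum_congr rfl fun p _ => step p, Finset.sum_comm]
    refine Finset.sum_congr rfl fun l _ => ?_
    rw [← Finset.sum_mul]
    congr 1
    rw [Finset.sum_comm]
    exact Finset.sum_congr rfl fun k _ => by rw [← Finset.sum_mul]
  have hsq : ∑ j : Fin m, (∑ p : Fin N, Y p j * w p) ^ 2
      = ∑ l : Fin m, (∑ k : Fin N, (∑ p : Fin N, w p * U p k) * (if (k : ℕ) = (l : ℕ) then σ (k : ℕ) else 0)) ^ 2 := by
    rw [Finset.sum_congr rfl fun j _ => by rw [hS j]]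
    exact sum_sq_ortho (fun l j => V j l) hVe _
  have heval : ∀ l : Fin m,
      (∑ k : Fin N, (∑ p : Fin N, w p * U p k) * (if (k : ℕ) = (l : ℕ) then σ (k : ℕ) else 0))
        = cnat U w (l : ℕ) * σ (l : ℕ) := by
    intro l
    by_cases h : (l : ℕ) < N
    · rw [Finset.sum_eq_single (⟨(l : ℕ), h⟩ : Fin N)]
      · simp [cnat, h]
      · intro k _ hk
        rw [if_neg, mul_zero]
        intro hkl
        exact hk (Fin.ext hkl)
      · intro hk; exact absurd (Finset.mem_univ _) hk
    · have hz : ∀ k : Fin N, (∑ p : Fin N, w p * U p k) * (if (k:ℕ) = (l:ℕ) then σ (k:ℕ) else 0) = 0 := by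
        intro k
        rw [if_neg, mul_zero]
        intro hkl; exact h (hkl ▸ k.isLt)
      rw [Finset.sum_congr rfl fun k _ => hz k, Finset.sum_const, smul_zero]
      simp [cnat, h]
  have hrange : ∑ l : Fin m, (cnat U w (l : ℕ) * σ (l : ℕ)) ^ 2
      = ∑ x ∈ range m, (cnat U w x * σ x) ^ 2 :=
    Fin.sum_univ_eq_sum_range (fun x => (cnat U w x * σ x) ^ 2) m
  rw [hsq, Finset.sum_congr rfl fun l _ => by rw [heval l], hrange]
  have hL : ∑ x ∈ range m, (cnat U w x * σ x) ^ 2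
      = ∑ x ∈ range (min N m), (cnat U w x * σ x) ^ 2 := by
    refine (Finset.sum_subset (Finset.range_subset_range.mpr (min_le_right N m)) ?_).symm
    intro x hx hx'
    have hxm := Finset.mem_range.mp hx
    have hN : ¬ x < N := fun hN => hx' (Finset.mem_range.mpr (lt_min hN hxm))
    simp [cnat, hN]
  have hR : ∑ x ∈ range N, (if x < m then σ x ^ 2 else 0) * (cnat U w x) ^ 2
      = ∑ x ∈ range (min N m), (cnat U w x * σ x) ^ 2 := by
    refine (Finset.sum_subset (Finset.range_subset_range.mpr (min_le_left N m)) ?_).symm.trans ?_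
    · intro x hx hx'
      have hxN := Finset.mem_range.mp hx
      have hm : ¬ x < m := fun hm => hx' (Finset.mem_range.mpr (lt_min hxN hm))
      simp [hm]
    · refine Finset.sum_congr rfl fun x hx => ?_
      have hxm : x < m := lt_of_lt_of_le (Finset.mem_range.mp hx) (min_le_right N m)
      rw [if_pos hxm]; ring
  rw [hL, hR]

/-- Eckart–Young / POD: for `Y = U Σ Vᵀ` with orthogonal `U, V` and
nonincreasing nonnegative singular values `σ`, the first `r` left singular
vectors minimize the projection error over all orthonormal families of size
`r`, and the minimal value is `Σ_{i > r} σ_i²`. -/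
theorem pod_best_rank_r (N m r : ℕ) (hrN : r ≤ N) (hrm : r ≤ m)
    (Y : Matrix (Fin N) (Fin m) ℝ)
    (U : Matrix (Fin N) (Fin N) ℝ) (V : Matrix (Fin m) (Fin m) ℝ)
    (σ : ℕ → ℝ)
    (hU : Uᵀ * U = 1) (hV : Vᵀ * V = 1)
    (hσ : ∀ i j : ℕ, i ≤ j → σ j ≤ σ i) (hσ0 : ∀ i, 0 ≤ σ i)
    (hSVD : Y = U * (Matrix.of fun (i : Fin N) (j : Fin m) =>
      if (i : ℕ) = (j : ℕ) then σ i else 0) * Vᵀ) :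
    let projError : (Fin r → Fin N → ℝ) → ℝ := fun ψ =>
      ∑ j : Fin m, ∑ n : Fin N,
        (Y n j - ∑ i : Fin r, (∑ p : Fin N, Y p j * ψ i p) * ψ i n) ^ 2
    let orthonormal : (Fin r → Fin N → ℝ) → Prop := fun ψ =>
      ∀ i i' : Fin r, ∑ n : Fin N, ψ i n * ψ i' n = if i = i' then 1 else 0
    let φ : Fin r → Fin N → ℝ := fun i n => U n (Fin.castLE hrN i)
    orthonormal φ ∧
      projError φ = ∑ i ∈ Finset.Ico r (min N m), σ i ^ 2 ∧
      ∀ ψ, orthonormal ψ → projError φ ≤ projError ψ := by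
  intro projError orthonormal φ
  have hUe : ∀ k k' : Fin N, ∑ n : Fin N, U n k * U n k' = if k = k' then 1 else 0 := by
    intro k k'
    have := congrFun (congrFun hU k) k'
    simpa [Matrix.mul_apply, Matrix.transpose_apply, Matrix.one_apply] using this
  have hUU' : U * Uᵀ = 1 := mul_eq_one_comm.mp hU
  have hUrow : ∀ p p' : Fin N, ∑ k : Fin N, U p k * U p' k = if p = p' then 1 else 0 := by
    intro p p'
    have := congrFun (congrFun hUU' p) p'
    simpa [Matrix.mul_apply, Matrix.transpose_apply, Matrix.one_apply] using this
  have hVe : ∀ l l' : Fin m, ∑ j : Fin m, V j l * V j l' = if l = l' then 1 else 0 := by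
    intro l l'
    have := congrFun (congrFun hV l) l'
    simpa [Matrix.mul_apply, Matrix.transpose_apply, Matrix.one_apply] using this
  have hONφ : orthonormal φ := by
    intro i i'
    rw [show (∑ n : Fin N, φ i n * φ i' n)
      = ∑ n : Fin N, U n (Fin.castLE hrN i) * U n (Fin.castLE hrN i') from rfl,
      hUe]
    simp [Fin.castLE_inj]
  have hPE : ∀ ψ, orthonormal ψ → projError ψ
      = (∑ j : Fin m, ∑ n : Fin N, (Y n j) ^ 2)
        - ∑ i : Fin r, ∑ j : Fin m, (∑ p : Fin N, Y p j * ψ i p) ^ 2 := by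
    intro ψ hψ
    have h1 : projError ψ
        = ∑ j : Fin m, ((∑ n : Fin N, (Y n j) ^ 2)
            - ∑ i : Fin r, (∑ p : Fin N, Y p j * ψ i p) ^ 2) :=
      Finset.sum_congr rfl fun j _ => bessel_identity ψ hψ (fun p => Y p j)
    rw [h1, Finset.sum_sub_distrib]
    congr 1
    exact Finset.sum_comm
  have hkey := key_formula Y U V σ hVe hSVD
  have hcU : ∀ (k : Fin N) (x : ℕ),
      cnat U (fun p => U p k) x = if x = (k : ℕ) then 1 else 0 := by
    intro k x
    by_cases h : x < N
    · rw [cnat, dif_pos h, hUe k ⟨x, h⟩]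
      congr 1
      · simp [Fin.ext_iff, eq_comm]
    · rw [cnat, dif_neg h, if_neg]
      intro hx
      exact h (hx ▸ k.isLt)
  have hcol : ∀ k : Fin N, ∑ j : Fin m, (∑ p : Fin N, Y p j * U p k) ^ 2
      = (if (k : ℕ) < m then σ (k : ℕ) ^ 2 else 0) := by
    intro k
    rw [hkey (fun p => U p k)]
    rw [Finset.sum_congr rfl fun x _ => by rw [hcU k x]]
    rw [Finset.sum_congr rfl fun x _ =>
      (by split <;> simp_all :
        (if x < m then σ x ^ 2 else 0) * (if x = (k : ℕ) then (1:ℝ) else 0) ^ 2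
          = if x = (k : ℕ) then (if x < m then σ x ^ 2 else 0) else 0)]
    rw [Finset.sum_ite_eq' (range N) ((k : ℕ)) (fun x => if x < m then σ x ^ 2 else 0)]
    simp [k.isLt]
  have hfro : ∑ j : Fin m, ∑ n : Fin N, (Y n j) ^ 2
      = ∑ x ∈ range N, (if x < m then σ x ^ 2 else 0) := by
    have h1 : ∀ j : Fin m, ∑ n : Fin N, (Y n j) ^ 2
        = ∑ k : Fin N, (∑ p : Fin N, Y p j * U p k) ^ 2 :=
      fun j => (sum_sq_ortho (fun p k => U p k) hUrow (fun p => Y p j)).symm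
    rw [Finset.sum_congr rfl fun j _ => h1 j, Finset.sum_comm,
      Finset.sum_congr rfl fun k _ => hcol k]
    exact Fin.sum_univ_eq_sum_range (fun x => if x < m then σ x ^ 2 else 0) N
  have hφcost : ∑ i : Fin r, ∑ j : Fin m, (∑ p : Fin N, Y p j * φ i p) ^ 2
      = ∑ x ∈ range r, (if x < m then σ x ^ 2 else 0) := by
    have h1 : ∀ i : Fin r, ∑ j : Fin m, (∑ p : Fin N, Y p j * φ i p) ^ 2
        = (if (i : ℕ) < m then σ (i : ℕ) ^ 2 else 0) := by
      intro i
      have := hcol (Fin.castLE hrN i)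
      simpa using this
    rw [Finset.sum_congr rfl fun i _ => h1 i]
    exact Fin.sum_univ_eq_sum_range (fun x => if x < m then σ x ^ 2 else 0) r
  have hlam_r : ∑ x ∈ range r, (if x < m then σ x ^ 2 else 0) = ∑ x ∈ range r, σ x ^ 2 :=
    Finset.sum_congr rfl fun x hx => if_pos (lt_of_lt_of_le (Finset.mem_range.mp hx) hrm)
  have hsplitN : ∑ x ∈ range N, (if x < m then σ x ^ 2 else 0)
      = ∑ x ∈ range r, (if x < m then σ x ^ 2 else 0)
        + ∑ x ∈ Ico r N, (if x < m then σ x ^ 2 else 0) := by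
    rw [Finset.range_eq_Ico, Finset.range_eq_Ico]
    exact (Finset.sum_Ico_consecutive _ (Nat.zero_le r) hrN).symm
  have htail : ∑ x ∈ Ico r N, (if x < m then σ x ^ 2 else 0)
      = ∑ x ∈ Finset.Ico r (min N m), σ x ^ 2 := by
    rw [← Finset.sum_subset (Finset.Ico_subset_Ico le_rfl (min_le_left N m))
      (fun x hx hx' => ?_)]
    · refine Finset.sum_congr rfl fun x hx => ?_
      have := (Finset.mem_Ico.mp hx).2
      exact if_pos (lt_of_lt_of_le this (min_le_right N m))
    · have h1 := Finset.mem_Ico.mp hx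
      have h2 : ¬ x < min N m := fun hc => hx' (Finset.mem_Ico.mpr ⟨h1.1, hc⟩)
      have : ¬ x < m := fun hm => h2 (lt_min h1.2 hm)
      simp [this]
  have hval : projError φ = ∑ i ∈ Finset.Ico r (min N m), σ i ^ 2 := by
    rw [hPE φ hONφ, hfro, hφcost, hsplitN, htail]
    ring
  refine ⟨hONφ, hval, ?_⟩
  intro ψ hψ
  rw [hPE φ hONφ, hPE ψ hψ, hfro, hφcost]
  have hψcost : ∑ i : Fin r, ∑ j : Fin m, (∑ p : Fin N, Y p j * ψ i p) ^ 2
      = ∑ x ∈ range N, (if x < m then σ x ^ 2 else 0)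
          * (∑ i : Fin r, (cnat U (ψ i) x) ^ 2) := by
    rw [Finset.sum_congr rfl fun i _ => hkey (ψ i), Finset.sum_comm]
    exact Finset.sum_congr rfl fun x _ => (Finset.mul_sum _ _ _).symm
  rw [hψcost]
  have hmono' : ∀ i j : ℕ, i ≤ j →
      (if j < m then σ j ^ 2 else 0) ≤ (if i < m then σ i ^ 2 else 0) := by
    intro i j hij
    by_cases hjm : j < m
    · rw [if_pos hjm, if_pos (lt_of_le_of_lt hij hjm)]
      have h1 := hσ i j hij
      have h2 := hσ0 j
      nlinarith
    · rw [if_neg hjm]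
      by_cases him : i < m
      · rw [if_pos him]; positivity
      · rw [if_neg him]
  have hpos' : ∀ i : ℕ, (0:ℝ) ≤ (if i < m then σ i ^ 2 else 0) := by
    intro i; by_cases h : i < m
    · rw [if_pos h]; positivity
    · rw [if_neg h]
  have ht0 : ∀ x : ℕ, (0:ℝ) ≤ ∑ i : Fin r, (cnat U (ψ i) x) ^ 2 :=
    fun x => Finset.sum_nonneg fun i _ => sq_nonneg _
  have ht1 : ∀ x : ℕ, (∑ i : Fin r, (cnat U (ψ i) x) ^ 2) ≤ 1 := by
    intro x
    by_cases h : x < N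
    · have hb := bessel_identity ψ hψ (fun p => U p ⟨x, h⟩)
      have h0 : (0:ℝ) ≤ ∑ n : Fin N,
          ((fun p => U p ⟨x, h⟩) n
            - ∑ i : Fin r, (∑ p : Fin N, (fun p => U p ⟨x, h⟩) p * ψ i p) * ψ i n) ^ 2 :=
        Finset.sum_nonneg fun n _ => sq_nonneg _
      have h1 : ∑ p : Fin N, ((fun p => U p ⟨x, h⟩) p) ^ 2 = 1 := by
        have := hUe ⟨x, h⟩ ⟨x, h⟩
        rw [if_pos rfl] at this
        rw [← this]
        exact Finset.sum_congr rfl fun p _ => (sq _)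
      have hcc : ∀ i : Fin r, cnat U (ψ i) x
          = ∑ p : Fin N, (fun p => U p ⟨x, h⟩) p * ψ i p := by
        intro i
        rw [cnat, dif_pos h]
        exact Finset.sum_congr rfl fun p _ => mul_comm _ _
      rw [Finset.sum_congr rfl fun i _ => by rw [hcc i]]
      rw [hb, h1] at h0
      linarith
    · have : ∀ i : Fin r, cnat U (ψ i) x = 0 := fun i => dif_neg h
      rw [Finset.sum_congr rfl fun i _ => by rw [this i]]
      simp
  have htsum : ∑ x ∈ range N, (∑ i : Fin r, (cnat U (ψ i) x) ^ 2) = (r : ℝ) := by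
    rw [← Fin.sum_univ_eq_sum_range (fun x => ∑ i : Fin r, (cnat U (ψ i) x) ^ 2) N,
      Finset.sum_comm]
    have h1 : ∀ i : Fin r, ∑ k : Fin N, (cnat U (ψ i) (k : ℕ)) ^ 2 = 1 := by
      intro i
      have h2 : ∀ k : Fin N, cnat U (ψ i) (k : ℕ) = ∑ p : Fin N, ψ i p * U p k := by
        intro k
        rw [cnat, dif_pos k.isLt]
      rw [Finset.sum_congr rfl fun k _ => by rw [h2 k]]
      rw [sum_sq_ortho (fun p k => U p k) hUrow (ψ i)]
      have := hψ i i
      rw [if_pos rfl] at this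
      rw [← this]
      exact Finset.sum_congr rfl fun p _ => (sq _)
    rw [Finset.sum_congr rfl fun i _ => h1 i]
    simp
  have hkf : ∑ x ∈ range N, (if x < m then σ x ^ 2 else 0)
        * (∑ i : Fin r, (cnat U (ψ i) x) ^ 2)
      ≤ ∑ x ∈ range r, (if x < m then σ x ^ 2 else 0) :=
    kyfan hrN _ _ hmono' hpos' ht0 ht1 htsum
  linarith
end

section
/- If λ is a nonzero eigenvalue of the reduced matrix = UᵀY'VΣ⁻¹ with eigenvector w (Âw = λw), where Y = UΣVᵀ is a reduced SVD with UᵀU = I and VᵀV = I and Σ invertible, then ψ = Y'VΣ⁻¹w is an eigenvector of A = Y'Y† with the same eigenvalue λ, provided ψ ≠ 0. -/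
open Matrix

/-- Exact DMD modes are eigenvectors of the full DMD operator: if
`Â w = λ w` with `Â = Uᵀ Y' V Σ⁻¹`, `Y = U Σ Vᵀ` a reduced SVD, then
`ψ = Y' V Σ⁻¹ w` satisfies `A ψ = λ ψ` for `A = Y' Y† = Y' V Σ⁻¹ Uᵀ`. -/
theorem dmd_modes_are_eigenvectors (N m r : ℕ)
    (Y Y' : Matrix (Fin N) (Fin m) ℝ)
    (U : Matrix (Fin N) (Fin r) ℝ) (V : Matrix (Fin m) (Fin r) ℝ)
    (S : Matrix (Fin r) (Fin r) ℝ)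
    (hU : Uᵀ * U = 1) (hV : Vᵀ * V = 1) (hS : IsUnit S.det)
    (hSVD : Y = U * S * Vᵀ)
    (lam : ℝ) (hlam : lam ≠ 0) (w : Fin r → ℝ)
    (hw : (Uᵀ * Y' * V * S⁻¹).mulVec w = lam • w)
    (ψ : Fin N → ℝ) (hψ : ψ = (Y' * V * S⁻¹).mulVec w) (hψ0 : ψ ≠ 0) :
    (Y' * (V * S⁻¹ * Uᵀ)).mulVec ψ = lam • ψ := by
  subst hψ
  rw [mulVec_mulVec]
  have : Y' * (V * S⁻¹ * Uᵀ) * (Y' * V * S⁻¹) =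
      (Y' * V * S⁻¹) * (Uᵀ * Y' * V * S⁻¹) := by
    simp only [Matrix.mul_assoc]
  rw [this, ← mulVec_mulVec, hw, mulVec_smul]
end
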